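/- Suppose f : ℝ → ℝ is such that Δ_h f is continuous for every h ∈ ℝ, and f decomposes as f = a + γ with a additive and γ continuous. If moreover the map α ↦ δ_α^{n+1} f(1) is continuous at some point, then there exist an n-th order derivation d, a constant λ ∈ ℝ, and a continuous function γ such that f(x) = d(x) + λx + γ(x) for all x ∈ ℝ. -/

import Mathlib

noncomputable def δ (α : ℝ) (f : ℝ → ℝ) : ℝ → ℝ := fun x => f (α * x) - α * f x

def IsDerivOfOrder (n : ℕ) (d : ℝ → ℝ) : Prop :=
  (∀ x y : ℝ, d (x + y) = d x + d y) ∧ d 1 = 0 ∧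
    ∀ l : List ℝ, l.length = n + 1 → ∀ x : ℝ, (l.foldr δ d) x = 0

namespace Stmt18

open Finset Polynomial Filter

/-- `δ α` as an additive endomorphism of the group of additive maps `ℝ →+ ℝ`. -/
def D (α : ℝ) : AddMonoid.End (ℝ →+ ℝ) :=
  AddMonoidHom.mk'
    (fun b => AddMonoidHom.mk' (fun x => b (α * x) - α * b x)
      (fun x y => by simp only [mul_add, map_add]; ring))
    (fun b c => by ext x; simp [AddMonoidHom.mk'_apply]; ring)

@[simp] lemma D_apply (α : ℝ) (b : ℝ →+ ℝ) (x : ℝ) :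
    D α b x = b (α * x) - α * b x := rfl

lemma coe_D (α : ℝ) (b : ℝ →+ ℝ) : δ α ⇑b = ⇑(D α b) := rfl

/-- unbundled application of `D`, for use with `List.foldr`. -/
def Df (α : ℝ) (b : ℝ →+ ℝ) : ℝ →+ ℝ := D α b

lemma Df_def (α : ℝ) (b : ℝ →+ ℝ) : Df α b = D α b := rfl

lemma D_comm (α β : ℝ) : Commute (D α) (D β) := by
  show D α * D β = D β * D α
  refine DFunLike.ext _ _ fun b => DFunLike.ext _ _ fun x => ?_
  show D α (D β b) x = D β (D α b) x
  simp only [D_apply, map_sub]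
  ring_nf

lemma D_comm_apply (α β : ℝ) (b : ℝ →+ ℝ) : D α (D β b) = D β (D α b) := by
  have h := D_comm α β
  have := DFunLike.congr_fun h.eq b
  simpa [AddMonoid.End.coe_mul] using this

lemma D_add (α β : ℝ) : D (α + β) = D α + D β := by
  refine DFunLike.ext _ _ fun b => DFunLike.ext _ _ fun x => ?_
  show b ((α + β) * x) - (α + β) * b x = D α b x + D β b x
  simp only [D_apply, add_mul, map_add]
  ring

lemma D_zero : D (0 : ℝ) = 0 := by
  refine DFunLike.ext _ _ fun b => DFunLike.ext _ _ fun x => ?_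
  show b (0 * x) - 0 * b x = 0
  simp

lemma b_rat_mul (b : ℝ →+ ℝ) (q : ℚ) (x : ℝ) : b ((q : ℝ) * x) = (q : ℝ) * b x := by
  have h := map_rat_smul b q x
  simpa [Rat.smul_def] using h

lemma D_rat (q : ℚ) : D ((q : ℝ)) = 0 := by
  refine DFunLike.ext _ _ fun b => DFunLike.ext _ _ fun x => ?_
  show b ((q : ℝ) * x) - (q : ℝ) * b x = 0
  rw [b_rat_mul]
  ring

lemma D_rat_mul (q : ℚ) (α : ℝ) (b : ℝ →+ ℝ) (x : ℝ) :
    D ((q : ℝ) * α) b x = (q : ℝ) * D α b x := by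
  have h : b ((q : ℝ) * α * x) = (q : ℝ) * b (α * x) := by
    rw [mul_assoc]; exact b_rat_mul b q (α * x)
  simp only [D_apply, h]
  ring

lemma pow_scal (β : ℝ) (k : ℕ) (c : ℝ) :
    ∀ (b₁ b₂ : ℝ →+ ℝ), (∀ x, b₁ x = c * b₂ x) →
      ∀ x, ((D β ^ k) b₁) x = c * ((D β ^ k) b₂) x := by
  induction k with
  | zero => intro b₁ b₂ h x; simpa using h x
  | succ k ih =>
    intro b₁ b₂ h x
    have h' : ∀ x, (D β b₁) x = c * (D β b₂) x := by
      intro y; simp only [D_apply, h]; ring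
    have e1 : ((D β ^ (k + 1)) b₁) x = ((D β ^ k) (D β b₁)) x := by
      rw [pow_succ]; rfl
    have e2 : ((D β ^ (k + 1)) b₂) x = ((D β ^ k) (D β b₂)) x := by
      rw [pow_succ]; rfl
    rw [e1, e2]
    exact ih (D β b₁) (D β b₂) h' x

lemma D_rat_pow (q : ℚ) (α : ℝ) (k : ℕ) :
    ∀ (b : ℝ →+ ℝ) (x : ℝ),
      ((D ((q : ℝ) * α) ^ k) b) x = (q : ℝ) ^ k * ((D α ^ k) b) x := by
  induction k with
  | zero => intro b x; simp
  | succ k ih =>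
    intro b x
    have e1 : ((D ((q : ℝ) * α) ^ (k + 1)) b) x
        = ((D ((q : ℝ) * α) ^ k) (D ((q : ℝ) * α) b)) x := by
      rw [pow_succ]; rfl
    have e2 : ((D α ^ (k + 1)) b) x = ((D α ^ k) (D α b)) x := by
      rw [pow_succ]; rfl
    rw [e1, e2, ih (D ((q : ℝ) * α) b) x]
    have h3 := pow_scal α k (q : ℝ) (D ((q : ℝ) * α) b) (D α b)
      (fun y => D_rat_mul q α b y) x
    rw [h3]
    ring

lemma mixed (m : ℕ) (b : ℝ →+ ℝ) (H : ∀ g : ℝ, ((D g ^ (m + 1)) b) 1 = 0)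
    (α β : ℝ) : ((D β ^ m) (D α b)) 1 = 0 := by
  classical
  -- evaluation homomorphism
  let E : AddMonoid.End (ℝ →+ ℝ) →+ ℝ :=
    AddMonoidHom.mk' (fun T => (T b) 1) (fun T S => rfl)
  have hEterm : ∀ (q : ℚ) (p : ℕ × ℕ),
      E ((m + 1).choose p.1 • (D β ^ p.1 * D ((q : ℝ) * α) ^ p.2))
        = (((m + 1).choose p.1 : ℝ) * ((D β ^ p.1) ((D α ^ p.2) b)) 1) * (q : ℝ) ^ p.2 := by
    intro q p
    rw [map_nsmul]
    have h1 : E (D β ^ p.1 * D ((q : ℝ) * α) ^ p.2)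
        = ((D β ^ p.1) ((D ((q : ℝ) * α) ^ p.2) b)) 1 := rfl
    have h2 : ((D β ^ p.1) ((D ((q : ℝ) * α) ^ p.2) b)) 1
        = (q : ℝ) ^ p.2 * ((D β ^ p.1) ((D α ^ p.2) b)) 1 :=
      pow_scal β p.1 ((q : ℝ) ^ p.2) _ _ (fun x => D_rat_pow q α p.2 b x) 1
    rw [h1, h2, nsmul_eq_mul]
    ring
  have key : ∀ q : ℚ, ∑ p ∈ Finset.HasAntidiagonal.antidiagonal (m + 1),
      (((m + 1).choose p.1 : ℝ) * ((D β ^ p.1) ((D α ^ p.2) b)) 1) * (q : ℝ) ^ p.2 = 0 := by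
    intro q
    have hcomm : Commute (D β) (D ((q : ℝ) * α)) := D_comm _ _
    have h0 : E ((D β + D ((q : ℝ) * α)) ^ (m + 1)) = 0 := by
      rw [← D_add]; exact H _
    rw [hcomm.add_pow' (m + 1), map_sum] at h0
    rw [← h0]
    exact Finset.sum_congr rfl (fun p _ => (hEterm q p).symm)
  -- package as a polynomial identity
  set P : Polynomial ℝ := ∑ p ∈ Finset.HasAntidiagonal.antidiagonal (m + 1),
      Polynomial.C (((m + 1).choose p.1 : ℝ) * ((D β ^ p.1) ((D α ^ p.2) b)) 1)
        * Polynomial.X ^ p.2 with hPdef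
  have hev : ∀ q : ℚ, P.eval (q : ℝ) = 0 := by
    intro q
    rw [hPdef, Polynomial.eval_finset_sum]
    simpa [Polynomial.eval_mul, Polynomial.eval_pow] using key q
  have hroots : {x : ℝ | P.IsRoot x}.Infinite := by
    apply Set.Infinite.mono (s := Set.range ((↑) : ℚ → ℝ))
    · rintro x ⟨q, rfl⟩
      exact hev q
    · exact Set.infinite_range_of_injective Rat.cast_injective
  have hP : P = 0 := Polynomial.eq_zero_of_infinite_isRoot P hroots
  have hco : P.coeff 1 = 0 := by rw [hP]; simp
  rw [hPdef, Polynomial.finset_sum_coeff] at hco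
  rw [Finset.sum_eq_single ((m, 1) : ℕ × ℕ)] at hco
  · norm_num [Polynomial.coeff_C_mul, Polynomial.coeff_X_pow] at hco
    have h2 := hco.resolve_left (Nat.cast_add_one_ne_zero m)
    simpa using h2
  · intro p hp hne
    obtain ⟨p1, p2⟩ := p
    have hmem := Finset.HasAntidiagonal.mem_antidiagonal.mp hp
    have h2 : (1 : ℕ) ≠ p2 := by
      intro h1
      apply hne
      simp only [Prod.mk.injEq]
      omega
    rw [Polynomial.coeff_C_mul, Polynomial.coeff_X_pow, if_neg h2, mul_zero]
  · intro hnot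
    exact absurd (Finset.HasAntidiagonal.mem_antidiagonal.mpr (by omega)) hnot

lemma foldr_swap (l : List ℝ) (β : ℝ) (b : ℝ →+ ℝ) :
    l.foldr Df (D β b) = D β (l.foldr Df b) := by
  induction l with
  | nil => rfl
  | cons g l ih =>
    simp only [List.foldr_cons, ih, Df_def]
    exact D_comm_apply g β _

lemma vanish_at_one : ∀ (m : ℕ) (b : ℝ →+ ℝ),
    (∀ g : ℝ, ((D g ^ m) b) 1 = 0) →
    ∀ l : List ℝ, l.length = m → (l.foldr Df b) 1 = 0 := by
  intro m
  induction m with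
  | zero =>
    intro b H l hl
    have : l = [] := List.length_eq_zero_iff.mp hl
    subst this
    simpa using H 0
  | succ m ih =>
    intro b H l hl
    cases l with
    | nil => simp at hl
    | cons β l' =>
      have hl' : l'.length = m := by simpa using hl
      have key : ∀ g : ℝ, ((D g ^ m) (D β b)) 1 = 0 := fun g => mixed m b H β g
      have := ih (D β b) key l' hl'
      show (Df β (List.foldr Df b l')) 1 = 0
      rw [Df_def, ← foldr_swap]
      exact this

lemma coe_D_pow (α : ℝ) (m : ℕ) (b : ℝ →+ ℝ) : (δ α)^[m] ⇑b = ⇑((D α ^ m) b) := by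
  induction m with
  | zero => rfl
  | succ m ih =>
    rw [Function.iterate_succ_apply', ih, coe_D, pow_succ']
    rfl

lemma coe_foldr (l : List ℝ) (b : ℝ →+ ℝ) : l.foldr δ ⇑b = ⇑(l.foldr Df b) := by
  induction l with
  | nil => rfl
  | cons g l ih => rw [List.foldr_cons, List.foldr_cons, ih, coe_D]; rfl

lemma delta_iter_add (α : ℝ) (m : ℕ) :
    ∀ u v : ℝ → ℝ, (δ α)^[m] (fun y => u y + v y)
      = fun x => (δ α)^[m] u x + (δ α)^[m] v x := by
  induction m with
  | zero => intro u v; rfl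
  | succ m ih =>
    intro u v
    rw [Function.iterate_succ_apply]
    have h1 : δ α (fun y => u y + v y) = fun y => δ α u y + δ α v y := by
      funext y; simp [δ]; ring
    rw [h1, ih (δ α u) (δ α v)]
    funext x
    rw [Function.iterate_succ_apply, Function.iterate_succ_apply]

lemma cont_iter (γ : ℝ → ℝ) (hγ : Continuous γ) (m : ℕ) :
    Continuous (fun p : ℝ × ℝ => (δ p.1)^[m] γ p.2) := by
  induction m with
  | zero => exact hγ.comp continuous_snd
  | succ m ih =>
    have h : (fun p : ℝ × ℝ => (δ p.1)^[m + 1] γ p.2)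
        = fun p : ℝ × ℝ => (fun q : ℝ × ℝ => (δ q.1)^[m] γ q.2) (p.1, p.1 * p.2)
            - p.1 * (fun q : ℝ × ℝ => (δ q.1)^[m] γ q.2) (p.1, p.2) := by
      funext p
      rw [Function.iterate_succ_apply']
      rfl
    rw [h]
    exact ((ih.comp (continuous_fst.prodMk (continuous_fst.mul continuous_snd)))).sub
      (continuous_fst.mul (ih.comp (continuous_fst.prodMk continuous_snd)))

lemma const_of_periodic (ψ : ℝ → ℝ) (α₀ : ℝ) (hc : ContinuousAt ψ α₀)
    (hper : ∀ (β : ℝ) (q : ℚ), ψ (β + q) = ψ β) : ∀ β, ψ β = ψ α₀ := by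
  intro β
  have hmem : (α₀ - β) ∈ closure (Set.range ((↑) : ℚ → ℝ)) := by
    rw [Rat.denseRange_cast.closure_eq]; trivial
  obtain ⟨v, hv1, hv2⟩ := mem_closure_iff_seq_limit.mp hmem
  choose u hu using hv1
  have hu' : (fun n => ((u n : ℝ))) = v := funext hu
  have h1 : Tendsto (fun i => β + (u i : ℝ)) atTop (nhds α₀) := by
    have := hv2.const_add β
    rw [← hu'] at this
    simpa using this
  have h2 := (hc.tendsto).comp h1
  have h3 : (fun i => ψ (β + (u i : ℝ))) = fun _ => ψ β := funext fun i => hper β (u i)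
  rw [Function.comp_def, h3] at h2
  exact tendsto_nhds_unique tendsto_const_nhds h2

end Stmt18

open Stmt18 Filter

theorem stmt_18 (n : ℕ) (f : ℝ → ℝ)
    (hdiff : ∀ h : ℝ, Continuous (fun x : ℝ => f (x + h) - f x))
    (hdec : ∃ (a γ : ℝ → ℝ), (∀ x y : ℝ, a (x + y) = a x + a y) ∧
      Continuous γ ∧ ∀ x : ℝ, f x = a x + γ x)
    (hcont : ∃ α₀ : ℝ, ContinuousAt (fun α : ℝ => ((δ α)^[n + 1] f) 1) α₀) :
    ∃ (d : ℝ → ℝ) (lam : ℝ) (γ : ℝ → ℝ), IsDerivOfOrder n d ∧ Continuous γ ∧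
      ∀ x : ℝ, f x = d x + lam * x + γ x := by
  obtain ⟨a, γ, ha, hγc, hfx⟩ := hdec
  obtain ⟨α₀, hα₀⟩ := hcont
  set ab : ℝ →+ ℝ := AddMonoidHom.mk' a (fun x y => ha x y) with hab
  have hacoe : ⇑ab = a := rfl
  set ψ : ℝ → ℝ := fun α => ((D α ^ (n + 1)) ab) 1 with hψdef
  have hf : f = fun x => ab x + γ x := funext fun x => by rw [hacoe]; exact hfx x
  have hsplit : ∀ α : ℝ, (δ α)^[n + 1] f 1 = ψ α + (δ α)^[n + 1] γ 1 := by
    intro α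
    rw [hf, delta_iter_add α (n + 1) ⇑ab γ, coe_D_pow]
  have hψcont : ContinuousAt ψ α₀ := by
    have hG : Continuous (fun α : ℝ => (δ α)^[n + 1] γ 1) :=
      (cont_iter γ hγc (n + 1)).comp (continuous_id.prodMk continuous_const)
    have hrw : ψ = fun α => (δ α)^[n + 1] f 1 - (δ α)^[n + 1] γ 1 := by
      funext α; rw [hsplit α]; ring
    rw [hrw]
    exact hα₀.sub hG.continuousAt
  have hper : ∀ (β : ℝ) (q : ℚ), ψ (β + q) = ψ β := by
    intro β q
    show ((D (β + q) ^ (n + 1)) ab) 1 = ((D β ^ (n + 1)) ab) 1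
    rw [D_add, D_rat, add_zero]
  have hconst := const_of_periodic ψ α₀ hψcont hper
  have hzero : ψ α₀ = 0 := by
    have h0 := hconst 0
    have h00 : ψ 0 = 0 := by
      show ((D (0 : ℝ) ^ (n + 1)) ab) 1 = 0
      rw [D_zero, zero_pow (Nat.succ_ne_zero n)]
      rfl
    rw [← h0, h00]
  have hψ0 : ∀ α : ℝ, ((D α ^ (n + 1)) ab) 1 = 0 := by
    intro α
    have : ψ α = 0 := by rw [hconst α, hzero]
    exact this
  have hone : ∀ l : List ℝ, l.length = n + 1 → (l.foldr Df ab) 1 = 0 :=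
    vanish_at_one (n + 1) ab hψ0
  have hall : ∀ l : List ℝ, l.length = n + 1 → ∀ x : ℝ, (l.foldr Df ab) x = 0 := by
    intro l hl x
    cases l with
    | nil => simp at hl
    | cons β l' =>
      have hl' : l'.length = n := by simpa using hl
      set h : ℝ →+ ℝ := l'.foldr Df ab with hh
      have hlin : ∀ t : ℝ, h t = t * h 1 := by
        intro t
        have h1 := hone (t :: l') (by simp [hl'])
        rw [List.foldr_cons] at h1
        have h2 : h (t * 1) - t * h 1 = 0 := h1
        rw [mul_one] at h2
        linarith
      show Df β h x = 0
      rw [Df_def]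
      rw [D_apply, hlin (β * x), hlin x]
      ring
  refine ⟨fun x => a x - a 1 * x, a 1, γ, ⟨?_, ?_, ?_⟩, hγc, ?_⟩
  · intro x y
    show a (x + y) - a 1 * (x + y) = (a x - a 1 * x) + (a y - a 1 * y)
    rw [ha]
    ring
  · simp
  · intro l hl x
    rcases List.eq_nil_or_concat l with rfl | ⟨l', β, rfl⟩
    · simp at hl
    · have hl' : l'.length = n := by
        have := hl
        simp [List.concat_eq_append] at this
        omega
      rw [List.concat_eq_append, List.foldr_append]
      have hstep : ([β].foldr δ fun x => a x - a 1 * x) = δ β ⇑ab := by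
        funext t
        simp only [List.foldr_cons, List.foldr_nil, δ, hacoe]
        ring
      rw [hstep, coe_D, coe_foldr]
      have hres := hall (β :: l') (by simp [hl']) x
      rw [List.foldr_cons, Df_def, ← foldr_swap] at hres
      exact hres
  · intro x
    rw [hfx x]
    ring
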